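/- Let G be a multiplicative Lie algebra and H a subalgebra of G. Then H is isoclinic to the subalgebra H·𝒵(G) of G. -/

import Mathlib

universe u v

open scoped commutatorElement

/-- A multiplicative Lie algebra: a group with an extra binary operation `⋆`
satisfying the Ellis axioms. -/
class MultLieAlgebra (G : Type u) extends Group G where
  lstar : G → G → G
  lstar_self : ∀ g : G, lstar g g = 1
  lstar_mul_right : ∀ g h h' : G, lstar g (h * h') = lstar g h * (h * lstar g h' * h⁻¹)
  lstar_mul_left : ∀ g g' h : G, lstar (g * g') h = (g * lstar g' h * g⁻¹) * lstar g h
  lstar_jacobi : ∀ g h k : G,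
      lstar (lstar g h) (h * k * h⁻¹) * lstar (lstar h k) (k * g * k⁻¹) *
        lstar (lstar k g) (g * h * g⁻¹) = 1
  conj_lstar : ∀ k g h : G, k * lstar g h * k⁻¹ = lstar (k * g * k⁻¹) (k * h * k⁻¹)

namespace MultLieAlgebra

infixl:72 " ⋆ " => MultLieAlgebra.lstar

variable {G : Type u} [MultLieAlgebra G]

lemma one_lstar (x : G) : (1 : G) ⋆ x = 1 := by
  have h := lstar_mul_left (1 : G) 1 x
  simp only [one_mul, inv_one, mul_one] at h
  exact (right_eq_mul.mp h)

lemma lstar_one (x : G) : x ⋆ (1 : G) = 1 := by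
  have h := lstar_mul_right x (1 : G) 1
  simp only [one_mul, inv_one, mul_one] at h
  exact left_eq_mul.mp h

lemma inv_lstar_of_lstar_eq_one {g : G} (hg : ∀ x : G, g ⋆ x = 1) (y : G) : g⁻¹ ⋆ y = 1 := by
  have h := lstar_mul_left g⁻¹ g y
  simp only [inv_mul_cancel, one_lstar, hg, mul_one, inv_inv] at h
  simpa using h.symm

lemma lstar_inv_of_lstar_eq_one {g : G} (hg : ∀ x : G, x ⋆ g = 1) (y : G) : y ⋆ g⁻¹ = 1 := by
  have h := lstar_mul_right y g⁻¹ g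
  simp only [inv_mul_cancel, lstar_one, hg, mul_one, inv_inv] at h
  simpa using h.symm

/-- The multiplicative commutator ideal `ᴹ[G,G]`, generated by all commutators
`⁅a,b⁆` and all values `a ⋆ b`. -/
def mlCommutator (G : Type u) [MultLieAlgebra G] : Subgroup G :=
  Subgroup.closure {x : G | (∃ a b : G, x = ⁅a, b⁆) ∨ ∃ a b : G, x = a ⋆ b}

lemma commutator_mem_mlCommutator (a b : G) : ⁅a, b⁆ ∈ mlCommutator G :=
  Subgroup.subset_closure (Or.inl ⟨a, b, rfl⟩)

lemma lstar_mem_mlCommutator (a b : G) : a ⋆ b ∈ mlCommutator G :=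
  Subgroup.subset_closure (Or.inr ⟨a, b, rfl⟩)

instance mlCommutator_normal : (mlCommutator G).Normal := by
  constructor
  intro n hn g
  induction hn using Subgroup.closure_induction with
  | mem x hx =>
    rcases hx with ⟨a, b, rfl⟩ | ⟨a, b, rfl⟩
    · have : g * ⁅a, b⁆ * g⁻¹ = ⁅g * a * g⁻¹, g * b * g⁻¹⁆ := by
        simp only [commutatorElement_def]; group
      rw [this]; exact commutator_mem_mlCommutator _ _
    · rw [conj_lstar]; exact lstar_mem_mlCommutator _ _
  | one => simpa using one_mem (mlCommutator G)
  | mul x y hx hy ihx ihy =>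
    have : g * (x * y) * g⁻¹ = (g * x * g⁻¹) * (g * y * g⁻¹) := by group
    rw [this]; exact mul_mem ihx ihy
  | inv x hx ihx =>
    have : g * x⁻¹ * g⁻¹ = (g * x * g⁻¹)⁻¹ := by group
    rw [this]; exact inv_mem ihx

/-- The multiplicative Lie center `𝒵(G) = Z(G) ∩ LZ(G)`. -/
def mlCenter (G : Type u) [MultLieAlgebra G] : Subgroup G where
  carrier := {g : G | (∀ x : G, g * x = x * g) ∧ ∀ x : G, g ⋆ x = 1 ∧ x ⋆ g = 1}
  one_mem' := ⟨fun x => by simp, fun x => ⟨one_lstar x, lstar_one x⟩⟩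
  mul_mem' := by
    rintro a b ⟨ha₁, ha₂⟩ ⟨hb₁, hb₂⟩
    refine ⟨fun x => by rw [mul_assoc, hb₁ x, ← mul_assoc, ha₁ x, mul_assoc], fun x => ?_⟩
    constructor
    · rw [lstar_mul_left, (hb₂ x).1, (ha₂ x).1]; simp
    · rw [lstar_mul_right, (ha₂ x).2, (hb₂ x).2]; simp
  inv_mem' := by
    rintro a ⟨ha₁, ha₂⟩
    refine ⟨fun x => by rw [inv_mul_eq_iff_eq_mul, ← mul_assoc, ha₁ x, mul_assoc,
      mul_inv_cancel, mul_one], fun x => ?_⟩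
    exact ⟨inv_lstar_of_lstar_eq_one (fun y => (ha₂ y).1) x,
      lstar_inv_of_lstar_eq_one (fun y => (ha₂ y).2) x⟩

lemma mem_mlCenter_iff {g : G} :
    g ∈ mlCenter G ↔ (∀ x : G, g * x = x * g) ∧ ∀ x : G, g ⋆ x = 1 ∧ x ⋆ g = 1 :=
  Iff.rfl

instance mlCenter_normal : (mlCenter G).Normal := by
  constructor
  intro n hn g
  have h : g * n * g⁻¹ = n := by rw [← hn.1 g]; group
  rw [h]; exact hn

/-- An isoclinism between two multiplicative Lie algebras. -/
structure Isoclinism (G : Type u) (H : Type v) [MultLieAlgebra G] [MultLieAlgebra H] where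
  lam : (G ⧸ mlCenter G) ≃* (H ⧸ mlCenter H)
  mu : mlCommutator G ≃* mlCommutator H
  map_commutator : ∀ (g g' : G) (h h' : H),
    lam (QuotientGroup.mk g) = QuotientGroup.mk h →
    lam (QuotientGroup.mk g') = QuotientGroup.mk h' →
    (mu ⟨⁅g, g'⁆, commutator_mem_mlCommutator g g'⟩ : H) = ⁅h, h'⁆
  map_lstar : ∀ (g g' : G) (h h' : H),
    lam (QuotientGroup.mk g) = QuotientGroup.mk h →
    lam (QuotientGroup.mk g') = QuotientGroup.mk h' →
    (mu ⟨g ⋆ g', lstar_mem_mlCommutator g g'⟩ : H) = h ⋆ h'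

/-- Two multiplicative Lie algebras are isoclinic if there is an isoclinism between them. -/
def Isoclinic (G : Type u) (H : Type v) [MultLieAlgebra G] [MultLieAlgebra H] : Prop :=
  Nonempty (Isoclinism G H)

/-- Componentwise multiplicative Lie algebra structure on a binary product. -/
instance instProd (G : Type u) (H : Type v) [MultLieAlgebra G] [MultLieAlgebra H] :
    MultLieAlgebra (G × H) where
  lstar a b := (a.1 ⋆ b.1, a.2 ⋆ b.2)
  lstar_self a := by ext <;> simp [lstar_self]
  lstar_mul_right a b c := by ext <;> simp [lstar_mul_right]
  lstar_mul_left a b c := by ext <;> simp [lstar_mul_left]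
  lstar_jacobi a b c := by ext <;> simp [lstar_jacobi]
  conj_lstar k a b := by ext <;> simp [← conj_lstar]

/-- Componentwise multiplicative Lie algebra structure on a Pi type. -/
instance instPi {ι : Type v} (f : ι → Type u) [∀ i, MultLieAlgebra (f i)] :
    MultLieAlgebra (∀ i, f i) where
  lstar a b := fun i => a i ⋆ b i
  lstar_self a := by funext i; simp [lstar_self]
  lstar_mul_right a b c := by funext i; simp [lstar_mul_right]
  lstar_mul_left a b c := by funext i; simp [lstar_mul_left]
  lstar_jacobi a b c := by funext i; simp [lstar_jacobi]
  conj_lstar k a b := by funext i; simp [← conj_lstar]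

/-- The trivial multiplicative Lie algebra structure on the one-element group. -/
instance instPUnit : MultLieAlgebra PUnit.{u+1} where
  lstar _ _ := 1
  lstar_self _ := rfl
  lstar_mul_right _ _ _ := rfl
  lstar_mul_left _ _ _ := rfl
  lstar_jacobi _ _ _ := rfl
  conj_lstar _ _ _ := rfl

/-- A subalgebra of a multiplicative Lie algebra: a subgroup closed under `⋆`. -/
structure MLSubalgebra (G : Type u) [MultLieAlgebra G] extends Subgroup G where
  lstar_mem' : ∀ {a b : G}, a ∈ carrier → b ∈ carrier → a ⋆ b ∈ carrier

/-- A subalgebra is a multiplicative Lie algebra with the restricted operations. -/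
instance instSubalgebra (H : MLSubalgebra G) : MultLieAlgebra H.toSubgroup where
  lstar a b := ⟨(a : G) ⋆ (b : G), H.lstar_mem' a.2 b.2⟩
  lstar_self a := Subtype.ext (lstar_self (a : G))
  lstar_mul_right a b c := Subtype.ext (lstar_mul_right (a : G) b c)
  lstar_mul_left a b c := Subtype.ext (lstar_mul_left (a : G) b c)
  lstar_jacobi a b c := Subtype.ext (lstar_jacobi (a : G) b c)
  conj_lstar k a b := Subtype.ext (conj_lstar (k : G) a b)

lemma mul_center_lstar {z : G} (hz : z ∈ mlCenter G) (g y : G) : (g * z) ⋆ y = g ⋆ y := by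
  rw [lstar_mul_left, (hz.2 y).1]
  simp

lemma lstar_mul_center {z : G} (hz : z ∈ mlCenter G) (g y : G) : y ⋆ (g * z) = y ⋆ g := by
  rw [lstar_mul_right, (hz.2 y).2]
  simp

/-- The subalgebra `H·𝒵(G)` generated by a subalgebra `H` and the multiplicative
Lie center of `G`. -/
def MLSubalgebra.centerJoin (H : MLSubalgebra G) : MLSubalgebra G where
  carrier := {x : G | ∃ h ∈ H.carrier, ∃ z ∈ mlCenter G, x = h * z}
  one_mem' := ⟨1, H.toSubgroup.one_mem, 1, one_mem _, by simp⟩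
  mul_mem' := by
    rintro x y ⟨h, hh, z, hz, rfl⟩ ⟨h', hh', z', hz', rfl⟩
    refine ⟨h * h', H.toSubgroup.mul_mem hh hh', z * z', mul_mem hz hz', ?_⟩
    rw [mul_assoc, ← mul_assoc z h' z', hz.1 h', mul_assoc, ← mul_assoc, ← mul_assoc]
  inv_mem' := by
    rintro x ⟨h, hh, z, hz, rfl⟩
    refine ⟨h⁻¹, H.toSubgroup.inv_mem hh, z⁻¹, inv_mem hz, ?_⟩
    rw [mul_inv_rev, (inv_mem hz).1 h⁻¹]
  lstar_mem' := by
    rintro x y ⟨h, hh, z, hz, rfl⟩ ⟨h', hh', z', hz', rfl⟩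
    exact ⟨h ⋆ h', H.lstar_mem' hh hh', 1, one_mem _, by
      rw [mul_center_lstar hz, lstar_mul_center hz', mul_one]⟩

/-- An ideal of a multiplicative Lie algebra: a normal subgroup `I` with
`g ⋆ i ∈ I` and `i ⋆ g ∈ I` for all `g ∈ G`, `i ∈ I`. -/
structure MLIdeal (G : Type u) [MultLieAlgebra G] extends Subgroup G where
  conj_mem' : ∀ n : G, n ∈ carrier → ∀ g : G, g * n * g⁻¹ ∈ carrier
  lstar_mem_left' : ∀ (g : G) {i : G}, i ∈ carrier → g ⋆ i ∈ carrier
  lstar_mem_right' : ∀ (g : G) {i : G}, i ∈ carrier → i ⋆ g ∈ carrier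

instance MLIdeal.normal (I : MLIdeal G) : I.toSubgroup.Normal := ⟨I.conj_mem'⟩

/-- An ideal is in particular a subalgebra. -/
def MLIdeal.toMLSubalgebra (I : MLIdeal G) : MLSubalgebra G :=
  { I.toSubgroup with lstar_mem' := fun {a _} _ hb => I.lstar_mem_left' a hb }

lemma MLIdeal.lstar_congr (I : MLIdeal G) {a a' b b' : G}
    (ha : a⁻¹ * a' ∈ I.toSubgroup) (hb : b⁻¹ * b' ∈ I.toSubgroup) :
    (a ⋆ b)⁻¹ * (a' ⋆ b') ∈ I.toSubgroup := by
  obtain ⟨i, hi, rfl⟩ : ∃ i ∈ I.toSubgroup, a' = a * i :=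
    ⟨a⁻¹ * a', ha, by group⟩
  obtain ⟨j, hj, rfl⟩ : ∃ j ∈ I.toSubgroup, b' = b * j :=
    ⟨b⁻¹ * b', hb, by group⟩
  have h1 : (a * i) ⋆ (b * j) = (a * (i ⋆ (b * j)) * a⁻¹) * (a ⋆ (b * j)) :=
    lstar_mul_left a i (b * j)
  have h2 : a ⋆ (b * j) = (a ⋆ b) * (b * (a ⋆ j) * b⁻¹) := lstar_mul_right a b j
  rw [h1, h2]
  have hu : a * (i ⋆ (b * j)) * a⁻¹ ∈ I.toSubgroup :=
    I.conj_mem' _ (I.lstar_mem_right' _ hi) a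
  have hv : b * (a ⋆ j) * b⁻¹ ∈ I.toSubgroup :=
    I.conj_mem' _ (I.lstar_mem_left' _ hj) b
  have : (a ⋆ b)⁻¹ * (a * (i ⋆ (b * j)) * a⁻¹ * ((a ⋆ b) * (b * (a ⋆ j) * b⁻¹))) =
      ((a ⋆ b)⁻¹ * (a * (i ⋆ (b * j)) * a⁻¹) * (a ⋆ b)) * (b * (a ⋆ j) * b⁻¹) := by
    group
  rw [this]
  exact mul_mem (Subgroup.Normal.conj_mem' I.normal _ hu _) hv

/-- The quotient of a multiplicative Lie algebra by an ideal. -/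
instance instQuotient (I : MLIdeal G) : MultLieAlgebra (G ⧸ I.toSubgroup) where
  lstar := Quotient.map₂ (· ⋆ ·) (by
    intro a a' ha b b' hb
    have ha' : a⁻¹ * a' ∈ I.toSubgroup := QuotientGroup.leftRel_apply.mp ha
    have hb' : b⁻¹ * b' ∈ I.toSubgroup := QuotientGroup.leftRel_apply.mp hb
    exact QuotientGroup.leftRel_apply.mpr (I.lstar_congr ha' hb'))
  lstar_self x := Quotient.inductionOn x fun a => congrArg QuotientGroup.mk (lstar_self a)
  lstar_mul_right x y z := Quotient.inductionOn₃ x y z fun a b c =>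
    congrArg QuotientGroup.mk (lstar_mul_right a b c)
  lstar_mul_left x y z := Quotient.inductionOn₃ x y z fun a b c =>
    congrArg QuotientGroup.mk (lstar_mul_left a b c)
  lstar_jacobi x y z := Quotient.inductionOn₃ x y z fun a b c =>
    congrArg QuotientGroup.mk (lstar_jacobi a b c)
  conj_lstar x y z := Quotient.inductionOn₃ x y z fun a b c =>
    congrArg QuotientGroup.mk (conj_lstar a b c)

lemma quot_lstar (I : MLIdeal G) (a b : G) :
    (QuotientGroup.mk (a ⋆ b) : G ⧸ I.toSubgroup) = QuotientGroup.mk a ⋆ QuotientGroup.mk b :=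
  rfl

/-- The ideal `I ∩ ᴹ[G,G]`. -/
def MLIdeal.infCommutator (I : MLIdeal G) : MLIdeal G where
  carrier := {x : G | x ∈ I.toSubgroup ∧ x ∈ mlCommutator G}
  one_mem' := ⟨one_mem _, one_mem _⟩
  mul_mem' := fun ha hb => ⟨mul_mem ha.1 hb.1, mul_mem ha.2 hb.2⟩
  inv_mem' := fun ha => ⟨inv_mem ha.1, inv_mem ha.2⟩
  conj_mem' := fun n hn g =>
    ⟨I.conj_mem' n hn.1 g, Subgroup.Normal.conj_mem mlCommutator_normal n hn.2 g⟩
  lstar_mem_left' := by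
    intro g i hi
    exact ⟨I.lstar_mem_left' g hi.1, lstar_mem_mlCommutator _ _⟩
  lstar_mem_right' := by
    intro g i hi
    exact ⟨I.lstar_mem_right' g hi.1, lstar_mem_mlCommutator _ _⟩

/-- A multiplicative Lie algebra isomorphism is a group isomorphism preserving `⋆`. -/
def IsMLAEquiv {G : Type u} {H : Type v} [MultLieAlgebra G] [MultLieAlgebra H]
    (e : G ≃* H) : Prop :=
  ∀ a b : G, e (a ⋆ b) = e a ⋆ e b

/-- A witness that `G` and `H` arise as quotients of a common multiplicative Lie
algebra `K` by ideals `ZG`, `ZH`, with `G ∼ K ∼ H` (Theorem on common ancestors). -/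
structure CommonQuotientWitness (G : Type u) (H : Type u)
    [MultLieAlgebra G] [MultLieAlgebra H] where
  K : Type u
  [instK : MultLieAlgebra K]
  ZG : MLIdeal K
  ZH : MLIdeal K
  isoG : G ≃* (K ⧸ ZH.toSubgroup)
  isoG_lstar : IsMLAEquiv isoG
  isoH : H ≃* (K ⧸ ZG.toSubgroup)
  isoH_lstar : IsMLAEquiv isoH
  isoclinicGK : Isoclinic G K
  isoclinicKH : Isoclinic K H

/-- A witness that `G` and `H` embed as ideals of a common multiplicative Lie algebra
`K̃`, each isoclinic to `K̃` (common isoclinic descendant). -/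
structure CommonIdealWitness (G : Type u) (H : Type u)
    [MultLieAlgebra G] [MultLieAlgebra H] where
  K : Type u
  [instK : MultLieAlgebra K]
  KG : MLIdeal K
  KH : MLIdeal K
  isoG : G ≃* KG.toMLSubalgebra.toSubgroup
  isoG_lstar : IsMLAEquiv isoG
  isoH : H ≃* KH.toMLSubalgebra.toSubgroup
  isoH_lstar : IsMLAEquiv isoH
  isoclinicG : Isoclinic (KG.toMLSubalgebra.toSubgroup) K
  isoclinicH : Isoclinic (KH.toMLSubalgebra.toSubgroup) K

/-- A witness of a stem multiplicative Lie algebra isoclinic to `G`. -/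
structure StemWitness (G : Type u) [MultLieAlgebra G] where
  H : Type u
  [instH : MultLieAlgebra H]
  stem : mlCenter H ≤ mlCommutator H
  isoclinic : Isoclinic G H



section IsoclinicCenterJoin

lemma commutator_mul_center_left' {M : Type*} [Group M] {z : M}
    (hz : ∀ x : M, z * x = x * z) (a b : M) : ⁅a * z, b⁆ = ⁅a, b⁆ := by
  have h : z * b = b * z := hz b
  calc ⁅a * z, b⁆ = a * (z * b) * z⁻¹ * a⁻¹ * b⁻¹ := by group
    _ = a * (b * z) * z⁻¹ * a⁻¹ * b⁻¹ := by rw [h]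
    _ = ⁅a, b⁆ := by group

lemma commutator_mul_center_right' {M : Type*} [Group M] {z : M}
    (hz : ∀ x : M, z * x = x * z) (a b : M) : ⁅a, b * z⁆ = ⁅a, b⁆ := by
  have h : z * a⁻¹ = a⁻¹ * z := hz a⁻¹
  calc ⁅a, b * z⁆ = a * b * (z * a⁻¹) * z⁻¹ * b⁻¹ := by group
    _ = a * b * (a⁻¹ * z) * z⁻¹ * b⁻¹ := by rw [h]
    _ = ⁅a, b⁆ := by group

variable {G : Type u} [MultLieAlgebra G]

/-- If the underlying element is in the multiplicative Lie center of `G`, then the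
element of a subalgebra is in the center of the subalgebra. -/
lemma mem_mlCenter_subalgebra_of {H : MLSubalgebra G} {x : H.toSubgroup}
    (hx : (x : G) ∈ mlCenter G) : x ∈ mlCenter H.toSubgroup := by
  rw [mem_mlCenter_iff]
  refine ⟨fun y => Subtype.ext (hx.1 (y : G)), fun y => ?_⟩
  exact ⟨Subtype.ext ((hx.2 (y : G)).1), Subtype.ext ((hx.2 (y : G)).2)⟩

lemma MLSubalgebra.leCenterJoin (H : MLSubalgebra G) :
    H.toSubgroup ≤ H.centerJoin.toSubgroup := fun x hx =>
  ⟨x, hx, 1, one_mem _, by simp⟩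

lemma inclusion_mem_mlCenter_iff (H : MLSubalgebra G) (x : H.toSubgroup) :
    Subgroup.inclusion H.leCenterJoin x ∈ mlCenter H.centerJoin.toSubgroup ↔
      x ∈ mlCenter H.toSubgroup := by
  constructor
  · intro hx
    rw [mem_mlCenter_iff] at hx ⊢
    constructor
    · intro y
      apply Subtype.ext
      show (x : G) * (y : G) = (y : G) * (x : G)
      exact congrArg Subtype.val (hx.1 (Subgroup.inclusion H.leCenterJoin y))
    · intro y
      have h2 := hx.2 (Subgroup.inclusion H.leCenterJoin y)
      constructor
      · apply Subtype.ext
        show (x : G) ⋆ (y : G) = 1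
        exact congrArg Subtype.val h2.1
      · apply Subtype.ext
        show (y : G) ⋆ (x : G) = 1
        exact congrArg Subtype.val h2.2
  · intro hx
    rw [mem_mlCenter_iff] at hx ⊢
    constructor
    · intro y
      obtain ⟨h, hh, z, hz, hy⟩ := y.2
      apply Subtype.ext
      show (x : G) * (y : G) = (y : G) * (x : G)
      have hxh : (x : G) * h = h * (x : G) := congrArg Subtype.val (hx.1 ⟨h, hh⟩)
      rw [hy, ← mul_assoc, hxh, mul_assoc, ← hz.1 (x : G), ← mul_assoc]
    · intro y
      obtain ⟨h, hh, z, hz, hy⟩ := y.2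
      constructor
      · apply Subtype.ext
        show (x : G) ⋆ (y : G) = 1
        rw [hy, lstar_mul_center hz]
        exact congrArg Subtype.val (hx.2 ⟨h, hh⟩).1
      · apply Subtype.ext
        show (y : G) ⋆ (x : G) = 1
        rw [hy, mul_center_lstar hz]
        exact congrArg Subtype.val (hx.2 ⟨h, hh⟩).2

lemma map_mlCommutator_centerJoin_eq (H : MLSubalgebra G) :
    (mlCommutator H.toSubgroup).map H.toSubgroup.subtype =
      (mlCommutator H.centerJoin.toSubgroup).map H.centerJoin.toSubgroup.subtype := by
  apply le_antisymm
  · rw [Subgroup.map_le_iff_le_comap, mlCommutator, Subgroup.closure_le]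
    rintro x (⟨a, b, rfl⟩ | ⟨a, b, rfl⟩) <;>
      refine Subgroup.mem_comap.mpr (Subgroup.mem_map.mpr ?_)
    · exact ⟨⁅Subgroup.inclusion H.leCenterJoin a, Subgroup.inclusion H.leCenterJoin b⁆,
        commutator_mem_mlCommutator _ _, rfl⟩
    · exact ⟨Subgroup.inclusion H.leCenterJoin a ⋆ Subgroup.inclusion H.leCenterJoin b,
        lstar_mem_mlCommutator _ _, rfl⟩
  · rw [Subgroup.map_le_iff_le_comap, mlCommutator, Subgroup.closure_le]
    rintro x (⟨a, b, rfl⟩ | ⟨a, b, rfl⟩) <;>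
      refine Subgroup.mem_comap.mpr (Subgroup.mem_map.mpr ?_)
    · obtain ⟨h, hh, z, hz, ha⟩ := a.2
      obtain ⟨h', hh', z', hz', hb⟩ := b.2
      refine ⟨⁅(⟨h, hh⟩ : H.toSubgroup), (⟨h', hh'⟩ : H.toSubgroup)⁆,
        commutator_mem_mlCommutator _ _, ?_⟩
      show ⁅h, h'⁆ = (⁅a, b⁆ : H.centerJoin.toSubgroup).val
      show ⁅h, h'⁆ = ⁅(a : G), (b : G)⁆
      rw [ha, hb, commutator_mul_center_right' hz'.1, commutator_mul_center_left' hz.1]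
    · obtain ⟨h, hh, z, hz, ha⟩ := a.2
      obtain ⟨h', hh', z', hz', hb⟩ := b.2
      refine ⟨(⟨h, hh⟩ : H.toSubgroup) ⋆ (⟨h', hh'⟩ : H.toSubgroup),
        lstar_mem_mlCommutator _ _, ?_⟩
      show h ⋆ h' = (a : G) ⋆ (b : G)
      rw [ha, hb, lstar_mul_center hz', mul_center_lstar hz]

end IsoclinicCenterJoin

/-- A subalgebra `H` of `G` is isoclinic to the subalgebra `H·𝒵(G)`. -/
theorem isoclinic_centerJoin {G : Type u} [MultLieAlgebra G] (H : MLSubalgebra G) :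
    Isoclinic H.toSubgroup H.centerJoin.toSubgroup := by
  set A := H.toSubgroup with hA
  set B := H.centerJoin.toSubgroup with hB
  let inc : A →* B := Subgroup.inclusion H.leCenterJoin
  -- the map on quotients
  let phi : A →* B ⧸ mlCenter B := (QuotientGroup.mk' (mlCenter B)).comp inc
  have hker : mlCenter A ≤ phi.ker := by
    intro a ha
    have : inc a ∈ mlCenter B := (inclusion_mem_mlCenter_iff H a).mpr ha
    simpa [phi, MonoidHom.mem_ker, QuotientGroup.eq_one_iff] using this
  let lam0 : A ⧸ mlCenter A →* B ⧸ mlCenter B := QuotientGroup.lift _ phi hker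
  have hinj : Function.Injective lam0 := by
    rw [injective_iff_map_eq_one]
    intro q
    induction q using QuotientGroup.induction_on with
    | H a =>
      intro h1
      have : inc a ∈ mlCenter B := by
        rwa [show lam0 (QuotientGroup.mk a) = QuotientGroup.mk (inc a) from rfl,
          QuotientGroup.eq_one_iff] at h1
      rw [QuotientGroup.eq_one_iff]
      exact (inclusion_mem_mlCenter_iff H a).mp this
  have hsurj : Function.Surjective lam0 := by
    intro q
    induction q using QuotientGroup.induction_on with
    | H b =>
      obtain ⟨h, hh, z, hz, hb⟩ := b.2
      refine ⟨QuotientGroup.mk (⟨h, hh⟩ : A), ?_⟩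
      show QuotientGroup.mk (inc ⟨h, hh⟩) = QuotientGroup.mk b
      rw [QuotientGroup.eq]
      apply mem_mlCenter_subalgebra_of
      show (inc (⟨h, hh⟩ : A) : G)⁻¹ * (b : G) ∈ mlCenter G
      show h⁻¹ * (b : G) ∈ mlCenter G
      rw [hb, inv_mul_cancel_left]
      exact hz
  let lam : (A ⧸ mlCenter A) ≃* (B ⧸ mlCenter B) := MulEquiv.ofBijective lam0 ⟨hinj, hsurj⟩
  let eA := Subgroup.equivMapOfInjective (mlCommutator A) A.subtype A.subtype_injective
  let eB := Subgroup.equivMapOfInjective (mlCommutator B) B.subtype B.subtype_injective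
  let mu : mlCommutator A ≃* mlCommutator B :=
    eA.trans ((MulEquiv.subgroupCongr (map_mlCommutator_centerJoin_eq H)).trans eB.symm)
  have hmu_val : ∀ m : mlCommutator A, ((mu m : B) : G) = ((m : A) : G) := by
    intro m
    have h1 : eB (mu m) = MulEquiv.subgroupCongr (map_mlCommutator_centerJoin_eq H) (eA m) := by
      simp [mu, MulEquiv.apply_symm_apply]
    have h2 : ((eB (mu m) : G)) = ((mu m : B) : G) :=
      Subgroup.coe_equivMapOfInjective_apply _ _ _ _
    have h3 : ((MulEquiv.subgroupCongr (map_mlCommutator_centerJoin_eq H) (eA m) : G))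
        = ((m : A) : G) := by
      rw [MulEquiv.subgroupCongr_apply]
      exact Subgroup.coe_equivMapOfInjective_apply _ _ _ _
    rw [← h2, h1, h3]
  -- key: extract central difference from quotient equality
  have key : ∀ (g : A) (k : B), lam (QuotientGroup.mk g) = QuotientGroup.mk k →
      ∃ z ∈ mlCenter B, k = inc g * z := by
    intro g k hgk
    have : (QuotientGroup.mk (inc g) : B ⧸ mlCenter B) = QuotientGroup.mk k := hgk
    have hz : (inc g)⁻¹ * k ∈ mlCenter B := QuotientGroup.eq.mp this
    exact ⟨(inc g)⁻¹ * k, hz, by group⟩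
  refine ⟨⟨lam, mu, ?_, ?_⟩⟩
  · intro g g' k k' h1 h2
    obtain ⟨z, hz, rfl⟩ := key g k h1
    obtain ⟨z', hz', rfl⟩ := key g' k' h2
    have hcomm : ⁅inc g * z, inc g' * z'⁆ = ⁅inc g, inc g'⁆ := by
      rw [commutator_mul_center_right' (fun x => ((mem_mlCenter_iff).mp hz').1 x),
        commutator_mul_center_left' (fun x => ((mem_mlCenter_iff).mp hz).1 x)]
    apply Subtype.ext
    rw [hcomm]
    rw [hmu_val]
    rfl
  · intro g g' k k' h1 h2
    obtain ⟨z, hz, rfl⟩ := key g k h1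
    obtain ⟨z', hz', rfl⟩ := key g' k' h2
    have hst : (inc g * z) ⋆ (inc g' * z') = inc g ⋆ inc g' := by
      rw [lstar_mul_center hz', mul_center_lstar hz]
    apply Subtype.ext
    rw [hst, hmu_val]
    rfl


end MultLieAlgebra
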